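/- For every positive integer p, every primitive p-th root of unity ω_p ∈ ℂ, and every r ∈ ℤ, the identity x_2^{-1} δ( ω_p^r ((x_1−x_0)/x_2)^{1/p} ) = x_1^{-1} δ( ω_p^{−r} ((x_2+x_0)/x_1)^{1/p} ) holds as an identity of formal series in the variables x_0, x_1^{1/p}, x_2^{1/p}, where ((x_1−x_0)/x_2)^{1/p} means (x_1−x_0)^{1/p} x_2^{−1/p} with (x_1−x_0)^{1/p} expanded in nonnegative integral powers of x_0, and ((x_2+x_0)/x_1)^{1/p} means (x_2+x_0)^{1/p} x_1^{−1/p} with (x_2+x_0)^{1/p} expanded in nonnegative integral powers of x_0. -/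

import Mathlib

noncomputable section

open scoped BigOperators

/-- Generalized binomial coefficient `z(z-1)⋯(z-k+1)/k!`. -/
def cbinom (z : ℂ) (k : ℕ) : ℂ :=
  (∏ j ∈ Finset.range k, (z - (j : ℂ))) / (k.factorial : ℂ)

/-- Generalized binomial coefficient with integer lower index (zero for negative index). -/
def cbinomZ (z : ℂ) (k : ℤ) : ℂ := if 0 ≤ k then cbinom z k.toNat else 0

/-- delta-function identity (2.24).  For a positive integer `p`, a
primitive `p`-th root of unity `ωₚ` and `r ∈ ℤ`,
`x₂⁻¹ δ(ωₚ^r ((x₁-x₀)/x₂)^{1/p}) = x₁⁻¹ δ(ωₚ^{-r} ((x₂+x₀)/x₁)^{1/p})`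
as formal series in `x₀, x₁^{1/p}, x₂^{1/p}`, where `(x₁-x₀)^{1/p}` and `(x₂+x₀)^{1/p}`
are expanded in nonnegative integral powers of `x₀`.  It is stated as the equality of the
coefficients of `x₀^a x₁^{A/p} x₂^{B/p}` of the two sides; the coefficient of the
left-hand side is nonzero only when `a ≥ 0` (enforced by `cbinomZ`) and
`B = -A - pa - p`, and similarly for the right-hand side. -/
lemma cbinom_reflect (z : ℂ) (n : ℕ) :
    cbinom ((n : ℂ) - 1 - z) n = (-1 : ℂ) ^ n * cbinom z n := by
  unfold cbinom
  rw [← mul_div_assoc]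
  congr 1
  have h1 : ∀ j ∈ Finset.range n, ((n : ℂ) - 1 - z - j) = (-1) * (z - ((n - 1 - j : ℕ) : ℂ)) := by
    intro j hj
    rw [Finset.mem_range] at hj
    have h : (n - 1 - j) + (1 + j) = n := by omega
    have e := congrArg (Nat.cast : ℕ → ℂ) h
    push_cast at e
    have : ((n - 1 - j : ℕ) : ℂ) = (n : ℂ) - 1 - j := by linear_combination e
    rw [this]; ring
  rw [Finset.prod_congr rfl h1, Finset.prod_mul_distrib, Finset.prod_const, Finset.card_range]
  congr 1
  exact Finset.prod_range_reflect (fun j => z - (j : ℂ)) n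

theorem statement13 (p : ℕ) (hp : 0 < p) (ωp : ℂ) (hωp : IsPrimitiveRoot ωp p) (r : ℤ) :
    ∀ a A B : ℤ,
      (if B = -A - (p : ℤ) * a - p then
          (-1 : ℂ) ^ a * ωp ^ (r * (A + (p : ℤ) * a)) *
            cbinomZ (((A : ℂ) + (p : ℂ) * (a : ℂ)) / (p : ℂ)) a
        else 0)
      = (if B = -A - (p : ℤ) * a - p then
          ωp ^ (r * (A + (p : ℤ))) * cbinomZ ((-(A : ℂ) - (p : ℂ)) / (p : ℂ)) a
        else 0) := by
  intro a A B
  by_cases hB : B = -A - (p : ℤ) * a - p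
  · simp only [if_pos hB]
    by_cases ha : 0 ≤ a
    · have hne : ωp ≠ 0 := hωp.ne_zero hp.ne'
      have hp1 : ωp ^ (p : ℤ) = 1 := by
        rw [zpow_natCast, hωp.pow_eq_one]
      set n := a.toNat with hn
      have haN : (n : ℤ) = a := Int.toNat_of_nonneg ha
      have hpc : (p : ℂ) ≠ 0 := by exact_mod_cast hp.ne'
      -- omega factor
      have hω : ωp ^ (r * (A + (p : ℤ) * a)) = ωp ^ (r * (A + (p : ℤ))) := by
        have : r * (A + (p : ℤ) * a) = r * (A + (p : ℤ)) + (p : ℤ) * (r * (a - 1)) := by ring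
        have h2 : ωp ^ ((p : ℤ) * (r * (a - 1))) = 1 := by
          rw [zpow_mul, hp1, one_zpow]
        rw [this, zpow_add₀ hne, h2, mul_one]
      -- binomial factor
      have hz : ((n : ℂ) - 1 - ((A : ℂ) + (p : ℂ) * (a : ℂ)) / (p : ℂ))
          = (-(A : ℂ) - (p : ℂ)) / (p : ℂ) := by
        have hac : ((n : ℕ) : ℂ) = (a : ℂ) := by exact_mod_cast congrArg (Int.cast : ℤ → ℂ) haN
        field_simp [hac]
        rw [hac]
        ring
      have hcb := cbinom_reflect (((A : ℂ) + (p : ℂ) * (a : ℂ)) / (p : ℂ)) n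
      rw [hz] at hcb
      have hsign : (-1 : ℂ) ^ a = (-1 : ℂ) ^ n := by
        rw [← haN, zpow_natCast]
      unfold cbinomZ
      rw [if_pos ha, if_pos ha, ← hn, hω, hcb, hsign]
      ring
    · unfold cbinomZ
      rw [if_neg ha, if_neg ha, mul_zero, mul_zero]
  · simp only [if_neg hB]
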